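/- Let g be a Lie algebra over ℂ acting on ℂ^N via ρ₀ : g → gl(N,ℂ), let R = ℂ[v_i^{(j)} : 1 ≤ i ≤ N, j ∈ ℕ], and let ρ(x t^k) be the derivations defined by ρ(x t^k)(v_i^{(j)}) = (j!/(j−k)!) Σ_{i'} ρ₀(x)_{i i'} v_{i'}^{(j−k)} for j ≥ k and 0 otherwise. Let D̃ be the ℂ-derivation of R with D̃(v_i^{(j)}) = v_i^{(j+1)}. Then [ρ(x t^k), D̃] = k·ρ(x t^{k−1}) for all x ∈ g and k ≥ 1, and [ρ(x t^0), D̃] = 0. Consequently, if a ∈ R satisfies ρ(x t^k)(a) = 0 for all x ∈ g and k ∈ ℕ, then D̃(a) also satisfies ρ(x t^k)(D̃ a) = 0 for all x ∈ g and k ∈ ℕ; that is, D̃ maps g⊗ℂ[t]-invariants to g⊗ℂ[t]-invariants. -/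

import Mathlib

open MvPolynomial

lemma fact_aux (j k : ℕ) (h1 : 1 ≤ k) (h2 : k ≤ j) :
    (((j+1).factorial / (j+1-k).factorial : ℕ) : ℂ) =
      ((j.factorial / (j-k).factorial : ℕ) : ℂ) +
        (k : ℂ) * ((j.factorial / (j+1-k).factorial : ℕ) : ℂ) := by
  have hd : (j+1-k).factorial ∣ j.factorial :=
    Nat.factorial_dvd_factorial (by omega)
  have hA : (j+1).factorial / (j+1-k).factorial
      = (j+1) * (j.factorial / (j+1-k).factorial) := by
    rw [Nat.factorial_succ, Nat.mul_div_assoc _ hd]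
  have hB : j.factorial / (j-k).factorial
      = (j+1-k) * (j.factorial / (j+1-k).factorial) := by
    have h3 : j.factorial = (j.factorial / (j+1-k).factorial) * (j+1-k).factorial :=
      (Nat.div_mul_cancel hd).symm
    have h4 : (j+1-k).factorial = (j+1-k) * (j-k).factorial := by
      have : j+1-k = (j-k)+1 := by omega
      rw [this, Nat.factorial_succ]
    calc j.factorial / (j-k).factorial
        = ((j.factorial / (j+1-k).factorial) * ((j+1-k) * (j-k).factorial)) / (j-k).factorial := by
          rw [← h4, ← h3]
      _ = (j+1-k) * (j.factorial / (j+1-k).factorial) := by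
          rw [← mul_assoc, Nat.mul_div_cancel _ (Nat.factorial_pos _), mul_comm]
  have : (j+1).factorial / (j+1-k).factorial
      = j.factorial / (j-k).factorial + k * (j.factorial / (j+1-k).factorial) := by
    rw [hA, hB, ← add_mul]; congr 1; omega
  rw [this]; push_cast; ring


attribute [local instance 100] LieRing.ofAssociativeRing

/-- With the current-algebra action `ρ(x tᵏ)` on
`R = ℂ[v_i^{(j)} : 1 ≤ i ≤ N, j ∈ ℕ]` as before, and `D̃` the derivation with
`D̃(v_i^{(j)}) = v_i^{(j+1)}`, one has `[ρ(x tᵏ), D̃] = k·ρ(x t^{k−1})` for `k ≥ 1` and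
`[ρ(x t⁰), D̃] = 0`; consequently `D̃` maps `g ⊗ ℂ[t]`-invariants of `R` to
`g ⊗ ℂ[t]`-invariants. -/
theorem current_action_commutes_with_total_derivative {g : Type*} [LieRing g]
    [LieAlgebra ℂ g] (N : ℕ) (ρ₀ : g →ₗ⁅ℂ⁆ Matrix (Fin N) (Fin N) ℂ)
    (ρ : g → ℕ → Derivation ℂ (MvPolynomial (Fin N × ℕ) ℂ) (MvPolynomial (Fin N × ℕ) ℂ))
    (hρ : ∀ (x : g) (k : ℕ) (i : Fin N) (j : ℕ), k ≤ j →
      ρ x k (X (i, j)) = ((j.factorial / (j - k).factorial : ℕ) : ℂ) •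
        ∑ i' : Fin N, ρ₀ x i i' • X (i', j - k))
    (hρ' : ∀ (x : g) (k : ℕ) (i : Fin N) (j : ℕ), j < k → ρ x k (X (i, j)) = 0)
    (D : Derivation ℂ (MvPolynomial (Fin N × ℕ) ℂ) (MvPolynomial (Fin N × ℕ) ℂ))
    (hD : ∀ (i : Fin N) (j : ℕ), D (X (i, j)) = X (i, j + 1)) :
    (∀ (x : g) (k : ℕ), 1 ≤ k → ⁅ρ x k, D⁆ = (k : ℂ) • ρ x (k - 1)) ∧
    (∀ x : g, ⁅ρ x 0, D⁆ = 0) ∧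
    (∀ a : MvPolynomial (Fin N × ℕ) ℂ, (∀ (x : g) (k : ℕ), ρ x k a = 0) →
      ∀ (x : g) (k : ℕ), ρ x k (D a) = 0) := by
  have h1 : ∀ (x : g) (k : ℕ), 1 ≤ k → ⁅ρ x k, D⁆ = (k : ℂ) • ρ x (k - 1) := by
    intro x k hk
    apply derivation_ext
    rintro ⟨i, j⟩
    rw [Derivation.commutator_apply, Derivation.smul_apply, hD]
    rcases lt_trichotomy j (k-1) with hj | hj | hj
    · -- j + 1 < k : everything vanishes
      rw [hρ' x k i (j+1) (by omega), hρ' x k i j (by omega), hρ' x (k-1) i j (by omega)]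
      simp
    · -- j = k - 1
      subst hj
      rw [hρ' x k i (k-1) (by omega), hρ x k i ((k-1)+1) (by omega),
        hρ x (k-1) i (k-1) le_rfl]
      have e1 : k - 1 + 1 - k = 0 := by omega
      have e2 : k - 1 - (k - 1) = 0 := by omega
      rw [e1, e2, map_zero, sub_zero, smul_smul]
      congr 1
      have : k - 1 + 1 = k := by omega
      rw [this]
      have hk' : k = (k-1) + 1 := by omega
      rw [Nat.factorial_zero, Nat.div_one, Nat.div_one]
      rw [hk', Nat.factorial_succ]
      push_cast
      ring
    · -- k ≤ j
      have hkj : k ≤ j := by omega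
      rw [hρ x k i (j+1) (by omega), hρ x k i j hkj, hρ x (k-1) i j (by omega)]
      have e3 : j - (k-1) = j + 1 - k := by omega
      rw [e3]
      rw [Derivation.map_smul]
      rw [show D (∑ i' : Fin N, ρ₀ x i i' • X (i', j - k)) = ∑ i' : Fin N, D (ρ₀ x i i' • X (i', j - k)) from map_sum D.toLinearMap _ _]
      have hDX : ∀ i' : Fin N, D (ρ₀ x i i' • X (i', j - k)) = ρ₀ x i i' • X (i', j - k + 1) := by
        intro i'
        rw [Derivation.map_smul, hD]
      simp_rw [hDX]
      have e4 : j - k + 1 = j + 1 - k := by omega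
      rw [e4, ← sub_smul, smul_smul]
      congr 1
      have := fact_aux j k hk hkj
      rw [this]; ring
  have h2 : ∀ x : g, ⁅ρ x 0, D⁆ = 0 := by
    intro x
    apply derivation_ext
    rintro ⟨i, j⟩
    rw [Derivation.commutator_apply, hD, hρ x 0 i (j+1) (by omega), hρ x 0 i j (by omega)]
    simp only [Nat.sub_zero, Nat.div_self (Nat.factorial_pos _), Nat.cast_one, one_smul]
    rw [show D (∑ i' : Fin N, ρ₀ x i i' • X (i', j)) = ∑ i' : Fin N, D (ρ₀ x i i' • X (i', j)) from map_sum D.toLinearMap _ _]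
    have hDX : ∀ i' : Fin N, D (ρ₀ x i i' • X (i', j)) = ρ₀ x i i' • X (i', j + 1) := by
      intro i'
      rw [Derivation.map_smul, hD]
    simp_rw [hDX]
    simp
  refine ⟨h1, h2, ?_⟩
  intro a ha x k
  rcases Nat.eq_zero_or_pos k with rfl | hk
  · have := congrArg (fun d : Derivation ℂ (MvPolynomial (Fin N × ℕ) ℂ)
      (MvPolynomial (Fin N × ℕ) ℂ) => d a) (h2 x)
    simp only [Derivation.commutator_apply, Derivation.zero_apply] at this
    rw [ha x 0, map_zero, sub_zero] at this
    exact this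
  · have := congrArg (fun d : Derivation ℂ (MvPolynomial (Fin N × ℕ) ℂ)
      (MvPolynomial (Fin N × ℕ) ℂ) => d a) (h1 x k hk)
    simp only [Derivation.commutator_apply, Derivation.smul_apply] at this
    rw [ha x k, ha x (k-1), map_zero, sub_zero, smul_zero] at this
    exact this
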